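/- Let δ ≥ 1 be an integer and n ≥ 2δ + 1. Then λ₁(D(K_δ ∨ (K_{n−2δ} + δK₁))) is the largest real root of the cubic equation x³ − (n + δ − 4)x² − (2δn + 3n − 5δ² + δ − 5)x + δ²n − 2δn − 2n − 2δ³ + 5δ² + 2 = 0. -/

import Mathlib

open SimpleGraph Finset

/-- The distance matrix of a graph: the `(i,j)` entry is the graph distance from `i` to `j`. -/
noncomputable def distMatrix {V : Type*} [Fintype V] (G : SimpleGraph V) : Matrix V V ℝ :=
  fun i j => (G.dist i j : ℝ)

/-- The distance spectral radius `λ₁(D(G))`: the largest eigenvalue of the distance matrix. -/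
noncomputable def distSpecRad {V : Type*} [Fintype V] (G : SimpleGraph V) : ℝ :=
  sSup {μ : ℝ | ∃ v : V → ℝ, v ≠ 0 ∧ (distMatrix G).mulVec v = μ • v}

/-- The join `G ∨ H` of two graphs: all edges between the parts are added. -/
def graphJoin {α β : Type*} (G : SimpleGraph α) (H : SimpleGraph β) :
    SimpleGraph (α ⊕ β) where
  Adj x y :=
    match x, y with
    | Sum.inl a, Sum.inl a' => G.Adj a a'
    | Sum.inr b, Sum.inr b' => H.Adj b b'
    | Sum.inl _, Sum.inr _ => True
    | Sum.inr _, Sum.inl _ => True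
  symm := ⟨by rintro (a | a) (b | b) h <;> first | exact G.adj_symm h | exact H.adj_symm h | trivial⟩
  loopless := ⟨by rintro (a | a) h <;> first | exact G.irrefl h | exact H.irrefl h⟩

/-- The disjoint union `G + H` of two graphs. -/
def graphSum {α β : Type*} (G : SimpleGraph α) (H : SimpleGraph β) :
    SimpleGraph (α ⊕ β) where
  Adj x y :=
    match x, y with
    | Sum.inl a, Sum.inl a' => G.Adj a a'
    | Sum.inr b, Sum.inr b' => H.Adj b b'
    | _, _ => False
  symm := ⟨by rintro (a | a) (b | b) h <;> first | exact G.adj_symm h | exact H.adj_symm h | exact h⟩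
  loopless := ⟨by rintro (a | a) h <;> first | exact G.irrefl h | exact H.irrefl h⟩

/-- `m` pairwise disjoint copies of the complete graph `K_p`. -/
def repK (m p : ℕ) : SimpleGraph (Fin m × Fin p) where
  Adj x y := x.1 = y.1 ∧ x ≠ y
  symm := ⟨fun _ _ h => ⟨h.1.symm, h.2.symm⟩⟩
  loopless := ⟨fun _ h => h.2 rfl⟩

/-- The disjoint union of cliques `K_{m 0} + K_{m 1} + ⋯`. -/
def cliquesGraph {c : ℕ} (m : Fin c → ℕ) : SimpleGraph (Σ i, Fin (m i)) where
  Adj x y := x.1 = y.1 ∧ x ≠ y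
  symm := ⟨fun _ _ h => ⟨h.1.symm, h.2.symm⟩⟩
  loopless := ⟨fun _ h => h.2 rfl⟩

/-- `G` is `t`-tough: whenever deleting a vertex set `S` disconnects the graph,
`|S| ≥ t · c(G - S)`. -/
def IsTTough {V : Type*} [Fintype V] (t : ℝ) (G : SimpleGraph V) : Prop :=
  ∀ S : Finset V, ¬ (G.induce ((S : Set V)ᶜ)).Connected →
    t * Nat.card (G.induce ((S : Set V)ᶜ)).ConnectedComponent ≤ (S.card : ℝ)

/-! ### Auxiliary machinery -/

private lemma sum_ite_ne' {p : ℕ} (i0 : Fin p) (w : Fin p → ℝ) (x : ℝ) :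
    ∑ k : Fin p, (if i0 = k then 0 else x) * w k = x * (∑ k, w k) - x * w i0 := by
  have h : ∀ k : Fin p, (if i0 = k then (0:ℝ) else x) * w k
      = x * w k - (if i0 = k then x * w k else 0) := by
    intro k; split <;> ring
  rw [Finset.sum_congr rfl fun k _ => h k, Finset.sum_sub_distrib,
    Finset.sum_ite_eq, if_pos (Finset.mem_univ _), Finset.mul_sum]

private lemma sum_two' {p : ℕ} (f : Fin p → ℝ) :
    ∑ k : Fin p, 2 * f k = 2 * ∑ k, f k := by
  rw [Finset.mul_sum]

private lemma dist_two {V : Type*} (G : SimpleGraph V) {u v z : V} (huv : ¬ G.Adj u v)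
    (hne : u ≠ v) (h1 : G.Adj u z) (h2 : G.Adj z v) : G.dist u v = 2 := by
  have hle : G.dist u v ≤ 2 := by
    simpa using SimpleGraph.dist_le
      (SimpleGraph.Walk.cons h1 (SimpleGraph.Walk.cons h2 SimpleGraph.Walk.nil))
  have hr : G.Reachable u v :=
    ⟨SimpleGraph.Walk.cons h1 (SimpleGraph.Walk.cons h2 SimpleGraph.Walk.nil)⟩
  have h0 : G.dist u v ≠ 0 := by
    intro h
    rcases (SimpleGraph.dist_eq_zero_iff_eq_or_not_reachable).mp h with h' | h'
    · exact hne h'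
    · exact h' hr
  have h1' : G.dist u v ≠ 1 := fun h => huv ((SimpleGraph.dist_eq_one_iff_adj).mp h)
  omega

/-- The explicit distance matrix of `K_δ ∨ (K_m + δK₁)`. -/
private def M0 (δ m : ℕ) : Matrix (Fin δ ⊕ (Fin m ⊕ Fin δ)) (Fin δ ⊕ (Fin m ⊕ Fin δ)) ℝ :=
  fun x y =>
    match x, y with
    | Sum.inl i, Sum.inl j => if i = j then 0 else 1
    | Sum.inl _, Sum.inr _ => 1
    | Sum.inr _, Sum.inl _ => 1
    | Sum.inr (Sum.inl i), Sum.inr (Sum.inl j) => if i = j then 0 else 1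
    | Sum.inr (Sum.inl _), Sum.inr (Sum.inr _) => 2
    | Sum.inr (Sum.inr _), Sum.inr (Sum.inl _) => 2
    | Sum.inr (Sum.inr i), Sum.inr (Sum.inr j) => if i = j then 0 else 2

private lemma distMatrix_eq (δ m : ℕ) (hδ : 1 ≤ δ) :
    distMatrix (graphJoin (⊤ : SimpleGraph (Fin δ))
      (graphSum (⊤ : SimpleGraph (Fin m)) (⊥ : SimpleGraph (Fin δ)))) = M0 δ m := by
  set G := graphJoin (⊤ : SimpleGraph (Fin δ))
      (graphSum (⊤ : SimpleGraph (Fin m)) (⊥ : SimpleGraph (Fin δ))) with hG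
  have z0 : Fin δ := ⟨0, hδ⟩
  funext x y
  show (G.dist x y : ℝ) = M0 δ m x y
  obtain (i | i | i) := x <;> obtain (j | j | j) := y
  · by_cases h : i = j
    · subst h; simp [M0, SimpleGraph.dist_self]
    · have : G.Adj (Sum.inl i) (Sum.inl j) := h
      rw [← SimpleGraph.dist_eq_one_iff_adj] at this
      simp [M0, this, h]
  · have : G.Adj (Sum.inl i) (Sum.inr (Sum.inl j)) := trivial
    rw [← SimpleGraph.dist_eq_one_iff_adj] at this
    simp [M0, this]
  · have : G.Adj (Sum.inl i) (Sum.inr (Sum.inr j)) := trivial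
    rw [← SimpleGraph.dist_eq_one_iff_adj] at this
    simp [M0, this]
  · have : G.Adj (Sum.inr (Sum.inl i)) (Sum.inl j) := trivial
    rw [← SimpleGraph.dist_eq_one_iff_adj] at this
    simp [M0, this]
  · by_cases h : i = j
    · subst h; simp [M0, SimpleGraph.dist_self]
    · have : G.Adj (Sum.inr (Sum.inl i)) (Sum.inr (Sum.inl j)) := h
      rw [← SimpleGraph.dist_eq_one_iff_adj] at this
      simp [M0, this, h]
  · have hd : G.dist (Sum.inr (Sum.inl i)) (Sum.inr (Sum.inr j)) = 2 := by
      refine dist_two G (fun h => h) (by simp) (z := Sum.inl z0) trivial trivial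
    simp [M0, hd]
  · have hd : G.dist (Sum.inr (Sum.inr i)) (Sum.inl j) = 1 := by
      rw [SimpleGraph.dist_eq_one_iff_adj]; trivial
    simp [M0, hd]
  · have hd : G.dist (Sum.inr (Sum.inr i)) (Sum.inr (Sum.inl j)) = 2 := by
      refine dist_two G (fun h => h) (by simp) (z := Sum.inl z0) trivial trivial
    simp [M0, hd]
  · by_cases h : i = j
    · subst h; simp [M0, SimpleGraph.dist_self]
    · have hd : G.dist (Sum.inr (Sum.inr i)) (Sum.inr (Sum.inr j)) = 2 := by
        refine dist_two G (fun hh => hh) (by simp [h]) (z := Sum.inl z0) trivial trivial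
      simp [M0, hd, h]

section MulVec

variable {δ m : ℕ} (w : Fin δ ⊕ (Fin m ⊕ Fin δ) → ℝ)

private noncomputable def SA : ℝ := ∑ k : Fin δ, w (Sum.inl k)
private noncomputable def SB : ℝ := ∑ k : Fin m, w (Sum.inr (Sum.inl k))
private noncomputable def SC : ℝ := ∑ k : Fin δ, w (Sum.inr (Sum.inr k))

private lemma mulVec_A (i : Fin δ) :
    (M0 δ m).mulVec w (Sum.inl i) = SA w + SB w + SC w - w (Sum.inl i) := by
  simp only [Matrix.mulVec, dotProduct, Fintype.sum_sum_type, M0, SA, SB, SC]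
  rw [sum_ite_ne']
  simp only [one_mul]
  ring

private lemma mulVec_B (i : Fin m) :
    (M0 δ m).mulVec w (Sum.inr (Sum.inl i))
      = SA w + SB w + 2 * SC w - w (Sum.inr (Sum.inl i)) := by
  simp only [Matrix.mulVec, dotProduct, Fintype.sum_sum_type, M0, SA, SB, SC]
  rw [sum_ite_ne']
  simp only [one_mul, sum_two']
  ring

private lemma mulVec_C (i : Fin δ) :
    (M0 δ m).mulVec w (Sum.inr (Sum.inr i))
      = SA w + 2 * SB w + 2 * SC w - 2 * w (Sum.inr (Sum.inr i)) := by
  simp only [Matrix.mulVec, dotProduct, Fintype.sum_sum_type, M0, SA, SB, SC]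
  rw [sum_ite_ne']
  simp only [one_mul, sum_two']
  ring

end MulVec

/-- The quotient matrix `Q - μ·I` of the equitable partition. -/
private noncomputable def A3 (δ m : ℕ) (μ : ℝ) : Matrix (Fin 3) (Fin 3) ℝ :=
  !![(δ:ℝ)-1-μ, (m:ℝ), (δ:ℝ);
     (δ:ℝ), (m:ℝ)-1-μ, 2*(δ:ℝ);
     (δ:ℝ), 2*(m:ℝ), 2*(δ:ℝ)-2-μ]

private lemma root_mem (δ m : ℕ) (hδ : 1 ≤ δ) (hm : 1 ≤ m) (μ : ℝ)
    (hroot : (A3 δ m μ).det = 0) :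
    ∃ v : (Fin δ ⊕ (Fin m ⊕ Fin δ)) → ℝ, v ≠ 0 ∧ (M0 δ m).mulVec v = μ • v := by
  obtain ⟨u, hu, hker⟩ := (Matrix.exists_mulVec_eq_zero_iff).mpr hroot
  have e0 := congrFun hker 0
  have e1 := congrFun hker 1
  have e2 := congrFun hker 2
  simp [A3, Matrix.mulVec, dotProduct, Fin.sum_univ_three] at e0 e1 e2
  set v0 : (Fin δ ⊕ (Fin m ⊕ Fin δ)) → ℝ :=
    Sum.elim (fun _ => u 0) (Sum.elim (fun _ => u 1) (fun _ => u 2)) with hv0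
  refine ⟨v0, ?_, ?_⟩
  · obtain ⟨i, hi⟩ := Function.ne_iff.mp hu
    intro h
    fin_cases i
    · exact hi (congrFun h (Sum.inl ⟨0, hδ⟩))
    · exact hi (congrFun h (Sum.inr (Sum.inl ⟨0, hm⟩)))
    · exact hi (congrFun h (Sum.inr (Sum.inr ⟨0, hδ⟩)))
  · have hSA : SA v0 = (δ:ℝ) * u 0 := by
      simp [SA, hv0, Finset.sum_const, mul_comm]
    have hSB : SB v0 = (m:ℝ) * u 1 := by
      simp [SB, hv0, Finset.sum_const, mul_comm]
    have hSC : SC v0 = (δ:ℝ) * u 2 := by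
      simp [SC, hv0, Finset.sum_const, mul_comm]
    funext x
    obtain (i | i | i) := x
    · rw [mulVec_A, hSA, hSB, hSC]
      simp only [hv0, Sum.elim_inl, Pi.smul_apply, smul_eq_mul]
      linear_combination e0
    · rw [mulVec_B, hSA, hSB, hSC]
      simp only [hv0, Sum.elim_inr, Sum.elim_inl, Pi.smul_apply, smul_eq_mul]
      linear_combination e1
    · rw [mulVec_C, hSA, hSB, hSC]
      simp only [hv0, Sum.elim_inr, Pi.smul_apply, smul_eq_mul]
      linear_combination e2

private lemma mem_root (δ m : ℕ) (μ : ℝ)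
    (h : ∃ v : (Fin δ ⊕ (Fin m ⊕ Fin δ)) → ℝ, v ≠ 0 ∧ (M0 δ m).mulVec v = μ • v) :
    (A3 δ m μ).det = 0 ∨ μ = -1 ∨ μ = -2 := by
  obtain ⟨v, hv, heig⟩ := h
  set a := SA v with ha
  set b := SB v with hb
  set c := SC v with hc
  have hA : ∀ i : Fin δ, a + b + c - v (Sum.inl i) = μ * v (Sum.inl i) := by
    intro i
    have := congrFun heig (Sum.inl i)
    rw [mulVec_A] at this
    simpa using this
  have hB : ∀ i : Fin m, a + b + 2*c - v (Sum.inr (Sum.inl i)) = μ * v (Sum.inr (Sum.inl i)) := by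
    intro i
    have := congrFun heig (Sum.inr (Sum.inl i))
    rw [mulVec_B] at this
    simpa using this
  have hC : ∀ i : Fin δ,
      a + 2*b + 2*c - 2 * v (Sum.inr (Sum.inr i)) = μ * v (Sum.inr (Sum.inr i)) := by
    intro i
    have := congrFun heig (Sum.inr (Sum.inr i))
    rw [mulVec_C] at this
    simpa using this
  by_cases hz : a = 0 ∧ b = 0 ∧ c = 0
  · right
    obtain ⟨hza, hzb, hzc⟩ := hz
    obtain ⟨x, hx⟩ := Function.ne_iff.mp hv
    obtain (i | i | i) := x
    · left
      have := hA i
      rw [hza, hzb, hzc] at this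
      have h2 : (μ + 1) * v (Sum.inl i) = 0 := by linarith
      rcases mul_eq_zero.mp h2 with h3 | h3
      · linarith
      · exact absurd h3 (by simpa using hx)
    · left
      have := hB i
      rw [hza, hzb, hzc] at this
      have h2 : (μ + 1) * v (Sum.inr (Sum.inl i)) = 0 := by linarith
      rcases mul_eq_zero.mp h2 with h3 | h3
      · linarith
      · exact absurd h3 (by simpa using hx)
    · right
      have := hC i
      rw [hza, hzb, hzc] at this
      have h2 : (μ + 2) * v (Sum.inr (Sum.inr i)) = 0 := by linarith
      rcases mul_eq_zero.mp h2 with h3 | h3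
      · linarith
      · exact absurd h3 (by simpa using hx)
  · left
    -- sum the equations over each part
    have hsa : (∑ i : Fin δ, v (Sum.inl i)) = a := rfl
    have hsb : (∑ i : Fin m, v (Sum.inr (Sum.inl i))) = b := rfl
    have hsc : (∑ i : Fin δ, v (Sum.inr (Sum.inr i))) = c := rfl
    have sA : (δ:ℝ) * (a + b + c) - a = μ * a := by
      have h1 : ∑ i : Fin δ, (a + b + c - v (Sum.inl i)) = ∑ i : Fin δ, μ * v (Sum.inl i) :=
        Finset.sum_congr rfl (fun i _ => hA i)
      rw [Finset.sum_sub_distrib, Finset.sum_const, ← Finset.mul_sum, hsa] at h1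
      simp only [Finset.card_univ, Fintype.card_fin, nsmul_eq_mul] at h1
      linear_combination h1
    have sB : (m:ℝ) * (a + b + 2*c) - b = μ * b := by
      have h1 : ∑ i : Fin m, (a + b + 2*c - v (Sum.inr (Sum.inl i)))
          = ∑ i : Fin m, μ * v (Sum.inr (Sum.inl i)) :=
        Finset.sum_congr rfl (fun i _ => hB i)
      rw [Finset.sum_sub_distrib, Finset.sum_const, ← Finset.mul_sum, hsb] at h1
      simp only [Finset.card_univ, Fintype.card_fin, nsmul_eq_mul] at h1
      linear_combination h1
    have sC : (δ:ℝ) * (a + 2*b + 2*c) - 2*c = μ * c := by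
      have h1 : ∑ i : Fin δ, (a + 2*b + 2*c - 2 * v (Sum.inr (Sum.inr i)))
          = ∑ i : Fin δ, μ * v (Sum.inr (Sum.inr i)) :=
        Finset.sum_congr rfl (fun i _ => hC i)
      rw [Finset.sum_sub_distrib, Finset.sum_const, ← Finset.mul_sum, ← Finset.mul_sum, hsc] at h1
      simp only [Finset.card_univ, Fintype.card_fin, nsmul_eq_mul] at h1
      linear_combination h1
    -- transposed quotient system
    have hkey : (∃ u : Fin 3 → ℝ, u ≠ 0 ∧
        (!![(δ:ℝ)-1-μ, (δ:ℝ), (δ:ℝ);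
            (m:ℝ), (m:ℝ)-1-μ, 2*(m:ℝ);
            (δ:ℝ), 2*(δ:ℝ), 2*(δ:ℝ)-2-μ] : Matrix (Fin 3) (Fin 3) ℝ).mulVec u = 0) := by
      refine ⟨![a, b, c], ?_, ?_⟩
      · intro h
        exact hz ⟨congrFun h 0, congrFun h 1, congrFun h 2⟩
      · funext i
        fin_cases i
        · show _ = (0:ℝ)
          simp [Matrix.mulVec, dotProduct, Fin.sum_univ_three]
          linear_combination sA
        · show _ = (0:ℝ)
          simp [Matrix.mulVec, dotProduct, Fin.sum_univ_three]
          linear_combination sB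
        · show _ = (0:ℝ)
          simp [Matrix.mulVec, dotProduct, Fin.sum_univ_three]
          linear_combination sC
    have hdet0 := Matrix.exists_mulVec_eq_zero_iff.mp hkey
    have htr : (A3 δ m μ).det
        = (!![(δ:ℝ)-1-μ, (δ:ℝ), (δ:ℝ);
              (m:ℝ), (m:ℝ)-1-μ, 2*(m:ℝ);
              (δ:ℝ), 2*(δ:ℝ), 2*(δ:ℝ)-2-μ] : Matrix (Fin 3) (Fin 3) ℝ).det := by
      simp [A3, Matrix.det_fin_three, Matrix.vecHead, Matrix.vecTail]
      ring
    rw [htr]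
    exact hdet0

theorem stmt18 (δ n : ℕ) (hδ : 1 ≤ δ) (hn : 2 * δ + 1 ≤ n) :
    let L := distSpecRad (graphJoin (⊤ : SimpleGraph (Fin δ))
      (graphSum (⊤ : SimpleGraph (Fin (n - 2 * δ))) (⊥ : SimpleGraph (Fin δ))))
    let P : ℝ → ℝ := fun x =>
      x ^ 3 - ((n : ℝ) + (δ : ℝ) - 4) * x ^ 2
        - (2 * (δ : ℝ) * (n : ℝ) + 3 * (n : ℝ) - 5 * (δ : ℝ) ^ 2 + (δ : ℝ) - 5) * x
        + ((δ : ℝ) ^ 2 * (n : ℝ) - 2 * (δ : ℝ) * (n : ℝ) - 2 * (n : ℝ)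
            - 2 * (δ : ℝ) ^ 3 + 5 * (δ : ℝ) ^ 2 + 2)
    P L = 0 ∧ ∀ x : ℝ, P x = 0 → x ≤ L := by
  intro L P
  set m := n - 2 * δ with hm_def
  have h2δ : 2 * δ ≤ n := by omega
  have hm : 1 ≤ m := by omega
  have hcast : (m : ℝ) = (n : ℝ) - 2 * (δ : ℝ) := by
    rw [hm_def]; push_cast [h2δ]; ring
  have hd1 : (1:ℝ) ≤ (δ:ℝ) := by exact_mod_cast hδ
  have hn1 : 2*(δ:ℝ)+1 ≤ (n:ℝ) := by exact_mod_cast hn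
  have hP : ∀ x : ℝ, P x =
      x ^ 3 - ((n : ℝ) + (δ : ℝ) - 4) * x ^ 2
        - (2 * (δ : ℝ) * (n : ℝ) + 3 * (n : ℝ) - 5 * (δ : ℝ) ^ 2 + (δ : ℝ) - 5) * x
        + ((δ : ℝ) ^ 2 * (n : ℝ) - 2 * (δ : ℝ) * (n : ℝ) - 2 * (n : ℝ)
            - 2 * (δ : ℝ) ^ 3 + 5 * (δ : ℝ) ^ 2 + 2) := fun x => rfl
  have hPA : ∀ x : ℝ, (A3 δ m x).det = -(P x) := by
    intro x
    have hdet : (A3 δ m x).det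
        = ((δ:ℝ)-1-x) * (((m:ℝ)-1-x)*(2*(δ:ℝ)-2-x) - 2*(δ:ℝ)*(2*(m:ℝ)))
          - (m:ℝ)*((δ:ℝ)*(2*(δ:ℝ)-2-x) - 2*(δ:ℝ)*(δ:ℝ))
          + (δ:ℝ)*((δ:ℝ)*(2*(m:ℝ)) - ((m:ℝ)-1-x)*(δ:ℝ)) := by
      rw [Matrix.det_fin_three]
      simp [A3, Matrix.vecHead, Matrix.vecTail]
      ring
    rw [hdet, hcast, hP x]; ring
  set S : Set ℝ := {μ : ℝ | ∃ v : (Fin δ ⊕ (Fin m ⊕ Fin δ)) → ℝ,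
      v ≠ 0 ∧ (M0 δ m).mulVec v = μ • v} with hS_def
  have hL : L = sSup S := by
    rw [hS_def]
    show sSup {μ : ℝ | ∃ v : (Fin δ ⊕ (Fin m ⊕ Fin δ)) → ℝ, v ≠ 0 ∧
        (distMatrix (graphJoin (⊤ : SimpleGraph (Fin δ))
          (graphSum (⊤ : SimpleGraph (Fin m)) (⊥ : SimpleGraph (Fin δ))))).mulVec v = μ • v} = _
    rw [distMatrix_eq δ m hδ]
  -- the set of roots of P is finite
  set p : Polynomial ℝ := Polynomial.X ^ 3
      - Polynomial.C ((n : ℝ) + (δ : ℝ) - 4) * Polynomial.X ^ 2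
      - Polynomial.C (2 * (δ : ℝ) * (n : ℝ) + 3 * (n : ℝ) - 5 * (δ : ℝ) ^ 2 + (δ : ℝ) - 5)
          * Polynomial.X
      + Polynomial.C ((δ : ℝ) ^ 2 * (n : ℝ) - 2 * (δ : ℝ) * (n : ℝ) - 2 * (n : ℝ)
            - 2 * (δ : ℝ) ^ 3 + 5 * (δ : ℝ) ^ 2 + 2) with hp_def
  have hpeval : ∀ x : ℝ, Polynomial.eval x p = P x := by
    intro x; rw [hP x, hp_def]; simp
  have hpdeg : p.natDegree = 3 := by rw [hp_def]; compute_degree!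
  have hpne : p ≠ 0 := by
    intro h; rw [h] at hpdeg; simp at hpdeg
  have hRfin : {x : ℝ | P x = 0}.Finite := by
    have heq : {x : ℝ | P x = 0} = {x : ℝ | p.IsRoot x} := by
      ext x; simp [Polynomial.IsRoot, hpeval x]
    rw [heq]
    exact Polynomial.finite_setOf_isRoot hpne
  -- inclusions
  have hroots : ∀ x : ℝ, P x = 0 → x ∈ S := by
    intro x hx
    exact root_mem δ m hδ hm x (by rw [hPA x, hx, neg_zero])
  have hsub : S ⊆ {x : ℝ | P x = 0} ∪ {-1, -2} := by
    intro μ hμ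
    rcases mem_root δ m μ hμ with h | h | h
    · left
      have h2 := hPA μ
      rw [h] at h2
      show P μ = 0
      linarith
    · right; simp [h]
    · right; simp [h]
  -- existence of a large root via IVT
  have hcont : Continuous fun x : ℝ => P x := by
    have : (fun x : ℝ => P x) = fun x : ℝ =>
        x ^ 3 - ((n : ℝ) + (δ : ℝ) - 4) * x ^ 2
        - (2 * (δ : ℝ) * (n : ℝ) + 3 * (n : ℝ) - 5 * (δ : ℝ) ^ 2 + (δ : ℝ) - 5) * x
        + ((δ : ℝ) ^ 2 * (n : ℝ) - 2 * (δ : ℝ) * (n : ℝ) - 2 * (n : ℝ)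
            - 2 * (δ : ℝ) ^ 3 + 5 * (δ : ℝ) ^ 2 + 2) := funext hP
    rw [this]
    fun_prop
  have hab : (n:ℝ) - 1 ≤ 2*(n:ℝ) - (δ:ℝ) - 2 := by linarith
  have hlo : P ((n:ℝ) - 1) ≤ 0 := by
    have hfac : P ((n:ℝ)-1)
        = -((δ:ℝ) * (3*(n:ℝ)*((n:ℝ)-2*(δ:ℝ)-1) + 2*(n:ℝ) + 2*(δ:ℝ)^2)) := by
      rw [hP]; ring
    rw [hfac]
    have t1 : (0:ℝ) ≤ 3*(n:ℝ)*((n:ℝ)-2*(δ:ℝ)-1) := by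
      apply mul_nonneg (by linarith) (by linarith)
    have t2 : (0:ℝ) ≤ (δ:ℝ)^2 := sq_nonneg _
    have t3 : (0:ℝ) ≤ (δ:ℝ) * (3*(n:ℝ)*((n:ℝ)-2*(δ:ℝ)-1) + 2*(n:ℝ) + 2*(δ:ℝ)^2) := by
      apply mul_nonneg (by linarith)
      nlinarith
    linarith
  have hhi : 0 ≤ P (2*(n:ℝ) - (δ:ℝ) - 2) := by
    have hfac : P (2*(n:ℝ)-(δ:ℝ)-2)
        = 4*((n:ℝ)-2*(δ:ℝ)-1)^3 + 6*((n:ℝ)-2*(δ:ℝ)-1)^2 + 2*((n:ℝ)-2*(δ:ℝ)-1)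
          + 8*((n:ℝ)-2*(δ:ℝ)-1)^2*(δ:ℝ) + 7*((n:ℝ)-2*(δ:ℝ)-1)*(δ:ℝ)
          + 6*((n:ℝ)-2*(δ:ℝ)-1)*(δ:ℝ)^2 + 2*(δ:ℝ)^2 + 3*(δ:ℝ)^3 := by
      rw [hP]; ring
    rw [hfac]
    have ht : (0:ℝ) ≤ (n:ℝ)-2*(δ:ℝ)-1 := by linarith
    have hd0 : (0:ℝ) ≤ (δ:ℝ) := by linarith
    have := sq_nonneg ((n:ℝ)-2*(δ:ℝ)-1)
    have := sq_nonneg (δ:ℝ)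
    nlinarith [mul_nonneg (mul_nonneg ht ht) ht, mul_nonneg (mul_nonneg ht ht) hd0,
      mul_nonneg (mul_nonneg ht hd0) hd0, mul_nonneg ht hd0,
      mul_nonneg (mul_nonneg hd0 hd0) hd0, mul_nonneg hd0 hd0]
  have hivt := intermediate_value_Icc hab hcont.continuousOn
  have h0mem : (0:ℝ) ∈ Set.Icc (P ((n:ℝ)-1)) (P (2*(n:ℝ)-(δ:ℝ)-2)) := ⟨hlo, hhi⟩
  obtain ⟨x₀, hx₀mem, hx₀⟩ := hivt h0mem
  have hx₀S : x₀ ∈ S := hroots x₀ hx₀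
  have hSfin : S.Finite :=
    Set.Finite.subset (hRfin.union ((Set.finite_singleton (-2:ℝ)).insert (-1))) hsub
  have hSne : S.Nonempty := ⟨x₀, hx₀S⟩
  have hLmem : sSup S ∈ S := hSne.csSup_mem hSfin
  have hLub : ∀ y ∈ S, y ≤ sSup S := fun y hy => le_csSup hSfin.bddAbove hy
  constructor
  · rcases hsub hLmem with h | h
    · rw [hL]; exact h
    · exfalso
      have h1 : (n:ℝ) - 1 ≤ x₀ := hx₀mem.1
      have h2 : x₀ ≤ sSup S := hLub x₀ hx₀S
      rcases h with h | h <;> rw [h] at h2 <;> linarith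
  · intro x hx
    rw [hL]
    exact hLub x (hroots x hx)
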